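/- arXiv:1211.1061 — 3 statements merged into one kernel-verified Lean document; each statement's English description precedes it below -/
import Mathlib

section
/- Let Ω be a hyperconvex domain in ℂⁿ with the property that whenever u is plurisubharmonic on Ω and upper semicontinuous on Ω̄ and there exists v ∈ PSH(Ω̄) with u = v on ∂Ω, then u ∈ PSH(Ω̄). Then Ω is P-hyperconvex. -/
open MeasureTheory Metric Set Filter

noncomputable section

/-- The positive part of an extended real number, as an element of `ℝ≥0∞`. -/
def erealPos (x : EReal) : ENNReal := if x = ⊤ then ⊤ else ENNReal.ofReal x.toReal

/-- The integral of an extended-real-valued function `u` against a measure `μ`,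
defined as the difference of the (unsigned) lower integrals of the positive and
negative parts of `u`. -/
def erealIntegral {α : Type*} [MeasurableSpace α] (μ : Measure α) (u : α → EReal) : EReal :=
  ((∫⁻ a, erealPos (u a) ∂μ : ENNReal) : EReal) - ((∫⁻ a, erealPos (-(u a)) ∂μ : ENNReal) : EReal)

/-- The normalized "angle" measure on `(0, 2π]`, used to express averages over circles. -/
def circleAngleMeasure : Measure ℝ :=
  (ENNReal.ofReal (2 * Real.pi))⁻¹ • volume.restrict (Set.Ioc 0 (2 * Real.pi))

/-- A function `u` with values in `[-∞, ∞)` is plurisubharmonic on an open set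
`U ⊆ ℂⁿ` if it is upper semicontinuous on `U`, takes no value `+∞` on `U`, and
satisfies the sub-mean-value inequality on every closed disc of every complex line
contained in `U`. -/
def PshOn {n : ℕ} (u : (Fin n → ℂ) → EReal) (U : Set (Fin n → ℂ)) : Prop :=
  UpperSemicontinuousOn u U ∧ (∀ z ∈ U, u z ≠ ⊤) ∧
  ∀ (a b : Fin n → ℂ) (r : ℝ), 0 < r →
    (∀ w : ℂ, ‖w‖ ≤ r → a + w • b ∈ U) →
    u a ≤ erealIntegral circleAngleMeasure
      (fun θ : ℝ => u (a + ((r : ℝ) * Complex.exp (θ * Complex.I)) • b))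

/-- `u : ℂⁿ → ℝ` belongs to `PSH°(X)` (for `X` compact) if there is an open
neighborhood `U ⊇ X` and a continuous plurisubharmonic function `v` on `U`
with `v = u` on `X`. -/
def PshO {n : ℕ} (u : (Fin n → ℂ) → ℝ) (X : Set (Fin n → ℂ)) : Prop :=
  ∃ U : Set (Fin n → ℂ), IsOpen U ∧ X ⊆ U ∧
    ∃ v : (Fin n → ℂ) → ℝ, ContinuousOn v U ∧ PshOn (fun z => (v z : EReal)) U ∧
      ∀ z ∈ X, u z = v z

/-- The Jensen measures at `z` with respect to the compact set `X`: Borel probability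
measures supported in `X` such that `u z ≤ ∫ u dμ` for all `u ∈ PSH°(X)`. -/
def JensenMeasures {n : ℕ} (X : Set (Fin n → ℂ)) (z : Fin n → ℂ) :
    Set (Measure (Fin n → ℂ)) :=
  {μ | IsProbabilityMeasure μ ∧ μ Xᶜ = 0 ∧
    ∀ u : (Fin n → ℂ) → ℝ, PshO u X → u z ≤ ∫ x, u x ∂μ}

/-- An upper semicontinuous function `u : X → [-∞, ∞)` is plurisubharmonic on the
compact set `X` if `u z ≤ ∫ u dμ` for every `z ∈ X` and every Jensen measure
`μ ∈ J_z(X)`. -/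
def PshCompact {n : ℕ} (u : (Fin n → ℂ) → EReal) (X : Set (Fin n → ℂ)) : Prop :=
  UpperSemicontinuousOn u X ∧ (∀ z ∈ X, u z ≠ ⊤) ∧
  ∀ z ∈ X, ∀ μ ∈ JensenMeasures X z, u z ≤ erealIntegral μ u

/-- A (bounded) domain: a bounded, connected, open subset of `ℂⁿ`. -/
def IsBoundedDomain {n : ℕ} (Ω : Set (Fin n → ℂ)) : Prop :=
  IsOpen Ω ∧ IsConnected Ω ∧ Bornology.IsBounded Ω

/-- The defining property of P-hyperconvexity: a non-constant function
`φ ∈ PSH(Ω̄) ∩ C(Ω̄)` vanishing on `∂Ω`. -/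
def PHxExhaustion {n : ℕ} (Ω : Set (Fin n → ℂ)) : Prop :=
  ∃ φ : (Fin n → ℂ) → ℝ,
    PshCompact (fun z => (φ z : EReal)) (closure Ω) ∧ ContinuousOn φ (closure Ω) ∧
    (∃ z ∈ closure Ω, ∃ w ∈ closure Ω, φ z ≠ φ w) ∧
    ∀ z ∈ frontier Ω, φ z = 0

/-- A bounded domain `Ω ⊂ ℂⁿ` is P-hyperconvex if there is a non-constant
`φ ∈ PSH(Ω̄) ∩ C(Ω̄)` with `φ = 0` on `∂Ω`. -/
def IsPHyperconvex {n : ℕ} (Ω : Set (Fin n → ℂ)) : Prop :=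
  IsBoundedDomain Ω ∧ PHxExhaustion Ω

/-- A bounded domain `Ω ⊂ ℂⁿ` is hyperconvex if there is a non-constant
`φ ∈ PSH(Ω) ∩ C(Ω̄)` with `φ = 0` on `∂Ω`. -/
def IsHyperconvex {n : ℕ} (Ω : Set (Fin n → ℂ)) : Prop :=
  IsBoundedDomain Ω ∧
  ∃ φ : (Fin n → ℂ) → ℝ,
    PshOn (fun z => (φ z : EReal)) Ω ∧ ContinuousOn φ (closure Ω) ∧
    (∃ z ∈ closure Ω, ∃ w ∈ closure Ω, φ z ≠ φ w) ∧
    ∀ z ∈ frontier Ω, φ z = 0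

end

/-- A hyperconvex domain for which the conclusion of Theorem C holds is P-hyperconvex. -/
theorem phyperconvex_of_boundary_determination {n : ℕ} (Ω : Set (Fin n → ℂ))
    (hΩ : IsHyperconvex Ω)
    (hprop : ∀ u : (Fin n → ℂ) → EReal, PshOn u Ω →
      UpperSemicontinuousOn u (closure Ω) → (∀ z ∈ closure Ω, u z ≠ ⊤) →
      ∀ v : (Fin n → ℂ) → EReal, PshCompact v (closure Ω) →
      (∀ z ∈ frontier Ω, u z = v z) → PshCompact u (closure Ω)) :
    IsPHyperconvex Ω := by
  obtain ⟨hdom, φ, hpsh, hcont, hnon, hzero⟩ := hΩ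
  have husc : UpperSemicontinuousOn (fun z => (φ z : EReal)) (closure Ω) :=
    (continuous_coe_real_ereal.comp_continuousOn hcont).upperSemicontinuousOn
  have hzeroPsh : PshCompact (fun _ => (0 : EReal)) (closure Ω) := by
    refine ⟨fun x _ y hy => Filter.Eventually.of_forall fun _ => hy, fun z _ => by simp, ?_⟩
    intro z _ μ _
    have hpos : erealPos (0 : EReal) = 0 := by simp [erealPos]
    have hneg : erealPos (-(0 : EReal)) = 0 := by simp [erealPos]
    simp [erealIntegral, hpos, hneg]
  have key := hprop (fun z => (φ z : EReal)) hpsh husc (fun z _ => EReal.coe_ne_top _)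
    (fun _ => (0 : EReal)) hzeroPsh (fun z hz => by simp [hzero z hz])
  exact ⟨hdom, φ, key, hcont, hnon, hzero⟩
end

section
/- Every P-hyperconvex domain Ω ⊂ ℂⁿ is fat, i.e., Ω equals the interior of its closure: Ω = (Ω̄)°. -/
open MeasureTheory Metric Set Filter

section AuxProof
lemma erealPos_coe (x : ℝ) : erealPos (x : EReal) = ENNReal.ofReal x := by
  simp [erealPos]

lemma ereal_coe_ennreal_finite {p : ENNReal} (hp : p ≠ ⊤) :
    (p : EReal) = ((p.toReal : ℝ) : EReal) := by
  conv_lhs => rw [← ENNReal.ofReal_toReal hp]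
  rw [EReal.coe_ennreal_ofReal, max_eq_left ENNReal.toReal_nonneg]

lemma erealIntegral_coe {α : Type*} [MeasurableSpace α] (μ : Measure α) (f : α → ℝ)
    (hf : MeasureTheory.Integrable f μ) :
    erealIntegral μ (fun a => (f a : EReal)) = ((∫ a, f a ∂μ : ℝ) : EReal) := by
  have h2 : ∀ a, erealPos (-(f a : EReal)) = ENNReal.ofReal (-f a) := by
    intro a; rw [← EReal.coe_neg, erealPos_coe]
  have key : ∀ g : α → ℝ, (∀ a, |g a| = |f a|) → (∫⁻ a, ENNReal.ofReal (g a) ∂μ) ≠ ⊤ := by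
    intro g hg
    refine ne_of_lt (lt_of_le_of_lt ?_ hf.2)
    refine lintegral_mono fun a => le_trans (Real.ofReal_le_enorm _) ?_
    simp only [Real.enorm_eq_ofReal_abs, hg a, le_refl]
  have hfin1 := key f (fun a => rfl)
  have hfin2 := key (fun a => -f a) (fun a => abs_neg _)
  rw [erealIntegral]
  simp only [erealPos_coe, h2]
  rw [ereal_coe_ennreal_finite hfin1, ereal_coe_ennreal_finite hfin2,
    ← EReal.coe_sub, integral_eq_lintegral_pos_part_sub_lintegral_neg_part hf]

lemma cam_prob : IsProbabilityMeasure circleAngleMeasure := by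
  constructor
  rw [circleAngleMeasure]
  simp [Real.volume_Ioc, ENNReal.inv_mul_cancel, Real.pi_pos,
    (by positivity : (0:ℝ) < 2 * Real.pi)]
  exact ENNReal.inv_mul_cancel (by simp [Real.pi_pos]) (by simp [ENNReal.mul_eq_top])

lemma integrable_cam (f : ℝ → ℝ) (hf : Continuous f) :
    MeasureTheory.Integrable f circleAngleMeasure := by
  rw [circleAngleMeasure]
  refine Integrable.smul_measure hf.integrableOn_Ioc ?_
  exact ENNReal.inv_ne_top.mpr (by simp [Real.pi_pos.le]; positivity)

lemma gamma_cont {n : ℕ} (a b : Fin n → ℂ) (r : ℝ) :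
    Continuous (fun θ : ℝ => a + ((r : ℝ) * Complex.exp (θ * Complex.I)) • b) := by
  fun_prop

lemma gamma_abs (r : ℝ) (hr : 0 ≤ r) (θ : ℝ) :
    ‖((r : ℝ) : ℂ) * Complex.exp (θ * Complex.I)‖ ≤ r := by
  rw [norm_mul, Complex.norm_exp_ofReal_mul_I]
  simp [abs_of_nonneg hr]

lemma circle_mem_jensen {n : ℕ} {X : Set (Fin n → ℂ)} (hXc : IsClosed X)
    (a b : Fin n → ℂ) (r : ℝ) (hr : 0 < r)
    (hdisc : ∀ w : ℂ, ‖w‖ ≤ r → a + w • b ∈ X) :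
    Measure.map (fun θ : ℝ => a + ((r : ℝ) * Complex.exp (θ * Complex.I)) • b)
      circleAngleMeasure ∈ JensenMeasures X a := by
  have := cam_prob
  set γ := fun θ : ℝ => a + ((r : ℝ) * Complex.exp (θ * Complex.I)) • b with hγ
  have hγc : Continuous γ := gamma_cont a b r
  have hγmem : ∀ θ, γ θ ∈ X := fun θ => hdisc _ (gamma_abs r hr.le θ)
  set μ := Measure.map γ circleAngleMeasure with hμ
  have hcompl : μ Xᶜ = 0 := by
    rw [hμ, Measure.map_apply hγc.measurable hXc.measurableSet.compl]
    have : γ ⁻¹' Xᶜ = ∅ := by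
      ext θ; simp [hγmem θ]
    rw [this, measure_empty]
  have haeX : ∀ᵐ x ∂μ, x ∈ X := by
    rw [ae_iff]
    exact hcompl
  refine ⟨Measure.isProbabilityMeasure_map hγc.aemeasurable, hcompl, ?_⟩
  intro u hu
  obtain ⟨U, hUo, hXU, v, hvc, hvpsh, hveq⟩ := hu
  have haU : a ∈ X := by simpa using hdisc 0 (by simp [hr.le])
  have key := hvpsh.2.2 a b r hr (fun w hw => hXU (hdisc w hw))
  have hvγ : Continuous (v ∘ γ) := hvc.comp_continuous hγc (fun θ => hXU (hγmem θ))
  have key' : ((v a : ℝ) : EReal) ≤ ((∫ θ, (v ∘ γ) θ ∂circleAngleMeasure : ℝ) : EReal) := by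
    rw [← erealIntegral_coe _ _ (integrable_cam _ hvγ)]; exact key
  clear key
  have hrestr : μ.restrict U = μ :=
    Measure.restrict_eq_self_of_ae_mem (haeX.mono (fun x hx => hXU hx))
  have hvmeas : AEStronglyMeasurable v μ := by
    rw [← hrestr]
    exact hvc.aestronglyMeasurable hUo.measurableSet
  have hmap : ∫ x, v x ∂μ = ∫ θ, v (γ θ) ∂circleAngleMeasure := by
    rw [hμ, integral_map hγc.aemeasurable]
    rw [← hμ]; exact hvmeas
  have hcongr : ∫ x, u x ∂μ = ∫ x, v x ∂μ :=
    integral_congr_ae (haeX.mono (fun x hx => hveq x hx))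
  rw [hveq a haU, hcongr, hmap]
  exact_mod_cast key'

lemma integrable_of_compactSupp {n : ℕ} {X : Set (Fin n → ℂ)} (hX : IsCompact X)
    (hXc : IsClosed X) {μ : Measure (Fin n → ℂ)} [IsFiniteMeasure μ] (hμ : μ Xᶜ = 0)
    {f : (Fin n → ℂ) → ℝ} (hf : ContinuousOn f X) : MeasureTheory.Integrable f μ := by
  have haeX : ∀ᵐ x ∂μ, x ∈ X := by rw [ae_iff]; exact hμ
  have hrestr : μ.restrict X = μ := Measure.restrict_eq_self_of_ae_mem haeX
  constructor
  · rw [← hrestr]; exact hf.aestronglyMeasurable hXc.measurableSet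
  · obtain ⟨C, hC⟩ := hX.exists_bound_of_continuousOn hf
    exact MeasureTheory.HasFiniteIntegral.of_bounded (haeX.mono fun x hx => hC x hx)

lemma cam_zero_of_nonneg {g : ℝ → ℝ} (hg : Continuous g) (hnn : ∀ θ, 0 ≤ g θ)
    (hint : ∫ θ, g θ ∂circleAngleMeasure = 0) :
    ∀ θ ∈ Set.Ioc 0 (2 * Real.pi), g θ = 0 := by
  have hpi : (0:ℝ) < 2 * Real.pi := by positivity
  have hc : (ENNReal.ofReal (2 * Real.pi))⁻¹ ≠ 0 := by
    simp [ENNReal.inv_ne_zero, ENNReal.mul_eq_top]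
  have hint' : ∫ θ, g θ ∂(volume.restrict (Set.Ioc 0 (2 * Real.pi))) = 0 := by
    rw [circleAngleMeasure, integral_smul_measure] at hint
    have : ((ENNReal.ofReal (2 * Real.pi))⁻¹).toReal ≠ 0 := by
      rw [ENNReal.toReal_ne_zero]
      exact ⟨hc, by simp [Real.pi_pos]⟩
    exact by
      rcases smul_eq_zero.mp hint with h | h
      · exact absurd h this
      · exact h
  have h0 : g =ᵐ[volume.restrict (Set.Ioc 0 (2 * Real.pi))] 0 := by
    have hgi : MeasureTheory.Integrable g (volume.restrict (Set.Ioc 0 (2*Real.pi))) :=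
      hg.integrableOn_Ioc
    exact (MeasureTheory.integral_eq_zero_iff_of_nonneg (fun x => hnn x) hgi).mp hint'
  -- the set where g ≠ 0 is open and null in Ioc
  have hnull : volume ({θ | g θ ≠ 0} ∩ Set.Ioc 0 (2*Real.pi)) = 0 := by
    have := (ae_restrict_iff' measurableSet_Ioc).mp h0
    rw [ae_iff] at this
    have heq : {a | ¬ (a ∈ Set.Ioc 0 (2*Real.pi) → g a = (0:ℝ→ℝ) a)}
        = {θ | g θ ≠ 0} ∩ Set.Ioc 0 (2*Real.pi) := by
      ext a; simp [and_comm]; tauto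
    rwa [heq] at this
  intro θ hθ
  by_contra hne
  have hopen : IsOpen {θ | g θ ≠ 0} := isOpen_ne.preimage hg
  obtain ⟨ε, hε, hball⟩ := Metric.isOpen_iff.mp hopen θ hne
  set c := max (θ - ε) (θ/2) with hcdef
  have hc1 : c < θ := max_lt (by linarith) (by linarith [hθ.1])
  have hsub : Set.Ioo c θ ⊆ {θ | g θ ≠ 0} ∩ Set.Ioc 0 (2*Real.pi) := by
    intro x hx
    constructor
    · apply hball
      rw [Metric.mem_ball, Real.dist_eq, abs_lt]
      constructor
      · have : θ - ε ≤ c := le_max_left _ _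
        linarith [hx.1]
      · linarith [hx.2]
    · constructor
      · have : θ/2 ≤ c := le_max_right _ _
        linarith [hθ.1, hx.1]
      · linarith [hx.2, hθ.2]
  have : volume (Set.Ioo c θ) = 0 := measure_mono_null hsub hnull
  rw [Real.volume_Ioo] at this
  simp only [ENNReal.ofReal_eq_zero] at this
  linarith

lemma phi_subaverage {n : ℕ} {X : Set (Fin n → ℂ)} (hX : IsCompact X) (hXc : IsClosed X)
    {φ : (Fin n → ℂ) → ℝ} (hφ : PshCompact (fun z => (φ z : EReal)) X)
    (hc : ContinuousOn φ X) (a b : Fin n → ℂ) (r : ℝ) (hr : 0 < r)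
    (hdisc : ∀ w : ℂ, ‖w‖ ≤ r → a + w • b ∈ X) :
    φ a ≤ ∫ θ, φ (a + ((r : ℝ) * Complex.exp (θ * Complex.I)) • b) ∂circleAngleMeasure := by
  set γ := fun θ : ℝ => a + ((r : ℝ) * Complex.exp (θ * Complex.I)) • b with hγ
  have hγc : Continuous γ := gamma_cont a b r
  have hγmem : ∀ θ, γ θ ∈ X := fun θ => hdisc _ (gamma_abs r hr.le θ)
  set μ := Measure.map γ circleAngleMeasure with hμ
  have hμJ := circle_mem_jensen hXc a b r hr hdisc
  haveI : IsProbabilityMeasure μ := hμJ.1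
  have haX : a ∈ X := by simpa using hdisc 0 (by simp [hr.le])
  have key := hφ.2.2 a haX μ hμJ
  have hint : MeasureTheory.Integrable φ μ := integrable_of_compactSupp hX hXc hμJ.2.1 hc
  rw [erealIntegral_coe μ φ hint] at key
  have key' : ((φ a : ℝ) : EReal) ≤ ((∫ x, φ x ∂μ : ℝ) : EReal) := key
  have key2 : φ a ≤ ∫ x, φ x ∂μ := by exact_mod_cast key'
  have hmap : ∫ x, φ x ∂μ = ∫ θ, φ (γ θ) ∂circleAngleMeasure := by
    rw [hμ, integral_map hγc.aemeasurable]
    rw [← hμ]; exact hint.1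
  rwa [hmap] at key2

lemma meets_omega {n : ℕ} {Ω : Set (Fin n → ℂ)} {V : Set (Fin n → ℂ)} (hV : IsOpen V)
    {x : Fin n → ℂ} (hx : x ∈ V) (hxcl : x ∈ closure Ω) : (Ω ∩ V).Nonempty := by
  have := mem_closure_iff.mp hxcl V hV hx
  exact this.imp fun y hy => ⟨hy.2, hy.1⟩

lemma D_preconnected {n : ℕ} {Ω : Set (Fin n → ℂ)} (hΩo : IsOpen Ω)
    (hconn : IsPreconnected Ω) : IsPreconnected (interior (closure Ω)) := by
  set D := interior (closure Ω) with hD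
  have hΩD : Ω ⊆ D := interior_maximal subset_closure hΩo
  intro u v hu hv hsub ⟨x, hxD, hxu⟩ ⟨y, hyD, hyv⟩
  obtain ⟨p, hpΩ, hpD, hpu⟩ : (Ω ∩ (D ∩ u)).Nonempty := by
    have h1 := meets_omega (isOpen_interior.inter hu) ⟨hxD, hxu⟩ (interior_subset hxD)
    exact h1.imp fun z hz => ⟨hz.1, hz.2⟩
  obtain ⟨q, hqΩ, hqD, hqv⟩ : (Ω ∩ (D ∩ v)).Nonempty := by
    have h1 := meets_omega (isOpen_interior.inter hv) ⟨hyD, hyv⟩ (interior_subset hyD)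
    exact h1.imp fun z hz => ⟨hz.1, hz.2⟩
  obtain ⟨w, hwΩ, hwuv⟩ := hconn u v hu hv (fun z hz => hsub (hΩD hz)) ⟨p, hpΩ, hpu⟩ ⟨q, hqΩ, hqv⟩
  exact ⟨w, hΩD hwΩ, hwuv⟩

lemma max_principle {n : ℕ} {Ω : Set (Fin n → ℂ)} (hΩo : IsOpen Ω)
    (hconn : IsPreconnected Ω) (hK : IsCompact (closure Ω))
    {φ : (Fin n → ℂ) → ℝ} (hφ : PshCompact (fun z => (φ z : EReal)) (closure Ω))
    (hc : ContinuousOn φ (closure Ω))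
    {a : Fin n → ℂ} (ha : a ∈ interior (closure Ω))
    (hmax : ∀ z ∈ closure Ω, φ z ≤ φ a) :
    ∀ z ∈ closure Ω, φ z = φ a := by
  haveI := cam_prob
  set D := interior (closure Ω) with hD
  have hDcl : D ⊆ closure Ω := interior_subset
  set S := {z ∈ D | φ z = φ a} with hS
  -- S is open
  have hSopen : IsOpen S := by
    rw [isOpen_iff_forall_mem_open]
    rintro z ⟨hzD, hzφ⟩
    obtain ⟨ε, hε, hball⟩ := Metric.isOpen_iff.mp isOpen_interior z hzD
    refine ⟨ball z (ε/2), ?_, isOpen_ball, by simp [hε]⟩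
    intro w hw
    have hwD : w ∈ D := hball (by
      have := mem_ball.mp hw
      exact mem_ball.mpr (by linarith))
    refine ⟨hwD, ?_⟩
    by_cases hwz : w = z
    · rw [hwz]; exact hzφ
    -- use the circle through w centered at z
    have hdisc : ∀ ww : ℂ, ‖ww‖ ≤ 1 → z + ww • (w - z) ∈ closure Ω := by
      intro ww hww
      apply hDcl; apply hball
      rw [mem_ball, dist_eq_norm, add_sub_cancel_left, norm_smul]
      have h1 : ‖w - z‖ < ε/2 := by
        rw [← dist_eq_norm]; exact mem_ball.mp hw
      have h2 : ‖ww‖ ≤ 1 := by exact hww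
      nlinarith [norm_nonneg (w - z), norm_nonneg ww]
    have hsub := phi_subaverage hK isClosed_closure hφ hc z (w - z) 1 one_pos hdisc
    set γ := fun θ : ℝ => z + ((1 : ℝ) * Complex.exp (θ * Complex.I)) • (w - z) with hγ
    have hγmem : ∀ θ, γ θ ∈ closure Ω := fun θ => hdisc _ (gamma_abs 1 zero_le_one θ)
    have hγc : Continuous γ := gamma_cont z (w - z) 1
    set g := fun θ : ℝ => φ z - φ (γ θ) with hg
    have hgc : Continuous g :=
      continuous_const.sub (hc.comp_continuous hγc hγmem)
    have hgnn : ∀ θ, 0 ≤ g θ := by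
      intro θ
      have := hmax (γ θ) (hγmem θ)
      simp only [hg, sub_nonneg]
      linarith [hzφ]
    have hgint : ∫ θ, g θ ∂circleAngleMeasure = 0 := by
      have hint : MeasureTheory.Integrable (fun θ => φ (γ θ)) circleAngleMeasure :=
        integrable_cam _ (hc.comp_continuous hγc hγmem)
      have h1 : ∫ θ, g θ ∂circleAngleMeasure
          = φ z - ∫ θ, φ (γ θ) ∂circleAngleMeasure := by
        rw [hg]
        rw [integral_sub (integrable_const _) hint, integral_const]
        simp
      have h2 : 0 ≤ ∫ θ, g θ ∂circleAngleMeasure :=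
        integral_nonneg hgnn
      have h3 : φ z ≤ ∫ θ, φ (γ θ) ∂circleAngleMeasure := hsub
      linarith
    have h2pi : (2 * Real.pi) ∈ Set.Ioc 0 (2 * Real.pi) := ⟨by positivity, le_refl _⟩
    have hg2pi := cam_zero_of_nonneg hgc hgnn hgint _ h2pi
    have hγ2pi : γ (2 * Real.pi) = w := by
      rw [hγ]
      have : ((1 : ℝ) : ℂ) * Complex.exp (((2 * Real.pi : ℝ) : ℂ) * Complex.I) = 1 := by
        push_cast
        rw [Complex.exp_two_pi_mul_I]; ring
      simp only [this, one_smul]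
      abel
    have hval : φ z - φ (γ (2 * Real.pi)) = 0 := hg2pi
    rw [hγ2pi] at hval
    have : φ w = φ z := by linarith
    rw [this]; exact hzφ
  -- T := D \ S is open
  set T := {z ∈ D | φ z ≠ φ a} with hT
  have hTopen : IsOpen T := by
    rw [isOpen_iff_forall_mem_open]
    rintro z ⟨hzD, hzφ⟩
    have hcont : ContinuousAt φ z :=
      (hc.mono hDcl).continuousAt (isOpen_interior.mem_nhds hzD)
    have hpre : {x | φ x ≠ φ a} ∈ nhds z := hcont.preimage_mem_nhds (isOpen_ne.mem_nhds hzφ)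
    obtain ⟨V, hVsub, hVo, hzV⟩ := _root_.mem_nhds_iff.mp (Filter.inter_mem hpre
      (isOpen_interior.mem_nhds hzD))
    exact ⟨V, fun x hx => ⟨(hVsub hx).2, (hVsub hx).1⟩, hVo, hzV⟩
  -- D is preconnected, S nonempty, so T is empty
  have hconnD : IsPreconnected D := D_preconnected hΩo hconn
  have hTempty : T = ∅ := by
    by_contra hne
    obtain ⟨y, hy⟩ := Set.nonempty_iff_ne_empty.mpr hne
    have := hconnD S T hSopen hTopen
      (fun z hz => by by_cases h : φ z = φ a
                      · exact Or.inl ⟨hz, h⟩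
                      · exact Or.inr ⟨hz, h⟩)
      ⟨a, ha, ⟨ha, rfl⟩⟩ ⟨y, hy.1, hy⟩
    obtain ⟨w, _, hwS, hwT⟩ := this
    exact hwT.2 hwS.2
  have hphiD : ∀ z ∈ D, φ z = φ a := by
    intro z hz
    by_contra h
    have : z ∈ T := ⟨hz, h⟩
    rw [hTempty] at this
    exact this
  -- extend to closure Ω by density: closure D = closure Ω
  intro z hz
  have hzclD : z ∈ closure D :=
    closure_mono (interior_maximal subset_closure hΩo) hz
  have hnb : (nhdsWithin z D).NeBot := mem_closure_iff_nhdsWithin_neBot.mp hzclD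
  have htend1 : Filter.Tendsto φ (nhdsWithin z D) (nhds (φ z)) :=
    (hc z hz).mono_left (nhdsWithin_mono z hDcl)
  have htend2 : Filter.Tendsto φ (nhdsWithin z D) (nhds (φ a)) := by
    apply Filter.Tendsto.congr' _ tendsto_const_nhds
    filter_upwards [self_mem_nhdsWithin] with x hx
    exact (hphiD x hx).symm
  exact tendsto_nhds_unique htend1 htend2


end AuxProof
/-- Every P-hyperconvex domain is fat. -/
theorem phyperconvex_fat {n : ℕ} (Ω : Set (Fin n → ℂ)) (hP : IsPHyperconvex Ω) :
    Ω = interior (closure Ω) := by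
  obtain ⟨⟨hΩo, hΩconn, hΩbd⟩, φ, hφpsh, hφc, ⟨z1, hz1, z2, hz2, hnecst⟩, hfr⟩ := hP
  have hK : IsCompact (closure Ω) := hΩbd.isCompact_closure
  set D := interior (closure Ω) with hD
  have hΩD : Ω ⊆ D := interior_maximal subset_closure hΩo
  refine Set.Subset.antisymm hΩD ?_
  intro z0 hz0
  by_contra hz0Ω
  have hz0fr : z0 ∈ frontier Ω := by
    rw [frontier, hΩo.interior_eq]
    exact ⟨interior_subset hz0, hz0Ω⟩
  have hφz0 : φ z0 = 0 := hfr z0 hz0fr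
  have hclne : (closure Ω).Nonempty := hΩconn.nonempty.closure
  obtain ⟨x, hxcl, hxmax⟩ := hK.exists_isMaxOn hclne hφc
  by_cases hxpos : 0 < φ x
  · -- max attained in Ω ⊆ D
    have hxΩ : x ∈ Ω := by
      by_contra hxΩ
      have : x ∈ frontier Ω := by
        rw [frontier, hΩo.interior_eq]; exact ⟨hxcl, hxΩ⟩
      rw [hfr x this] at hxpos
      exact lt_irrefl 0 hxpos
    have := max_principle hΩo hΩconn.isPreconnected hK hφpsh hφc (hΩD hxΩ)
      (fun z hz => hxmax hz)
    exact hnecst (by rw [this z1 hz1, this z2 hz2])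
  · -- φ ≤ 0, so φ z0 = 0 is a max on D
    push_neg at hxpos
    have hmax0 : ∀ z ∈ closure Ω, φ z ≤ φ z0 := by
      intro z hz
      rw [hφz0]
      exact le_trans (hxmax hz) hxpos
    have := max_principle hΩo hΩconn.isPreconnected hK hφpsh hφc hz0 hmax0
    exact hnecst (by rw [this z1 hz1, this z2 hz2])
end

section
/- Let Ω₁ and Ω₂ be P-hyperconvex domains in ℂⁿ whose intersection Ω := Ω₁ ∩ Ω₂ is nonempty and connected. Then Ω is P-hyperconvex. -/
open MeasureTheory Metric Set Filter

section Aux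

open scoped ENNReal

namespace PHxAux

lemma circleAngleMeasure_prob : IsProbabilityMeasure circleAngleMeasure := by
  constructor
  rw [circleAngleMeasure, Measure.smul_apply, Measure.restrict_apply MeasurableSet.univ,
    Set.univ_inter, Real.volume_Ioc, sub_zero, smul_eq_mul]
  exact ENNReal.inv_mul_cancel (ENNReal.ofReal_pos.mpr (by positivity)).ne' ENNReal.ofReal_ne_top

lemma erealPos_coe (x : ℝ) : erealPos (x : EReal) = ENNReal.ofReal x := by
  rw [erealPos, if_neg (EReal.coe_ne_top x), EReal.toReal_coe]

lemma coe_ennreal_eq {A : ENNReal} (h : A ≠ ⊤) : (A : EReal) = ((A.toReal : ℝ) : EReal) := by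
  conv_lhs => rw [← ENNReal.ofReal_toReal h]
  rw [EReal.coe_ennreal_ofReal, max_eq_left ENNReal.toReal_nonneg]

lemma erealIntegral_coe {α : Type*} [MeasurableSpace α] {μ : MeasureTheory.Measure α} {g : α → ℝ}
    (hg : Integrable g μ) :
    erealIntegral μ (fun a => ((g a : ℝ) : EReal)) = ((∫ a, g a ∂μ : ℝ) : EReal) := by
  have h2 : ∀ a : α, erealPos (-((g a : ℝ) : EReal)) = ENNReal.ofReal (-g a) := by
    intro a; rw [← EReal.coe_neg, erealPos_coe]
  rw [erealIntegral]
  simp_rw [erealPos_coe, h2]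
  have hB : (∫⁻ a, ENNReal.ofReal (-g a) ∂μ) ≠ ⊤ := hg.neg.lintegral_lt_top.ne
  rw [integral_eq_lintegral_pos_part_sub_lintegral_neg_part hg, EReal.coe_sub,
    ← coe_ennreal_eq hg.lintegral_lt_top.ne, ← coe_ennreal_eq hB]

lemma jensenMeasures_mono {n : ℕ} {X Y : Set (Fin n → ℂ)} (hXY : X ⊆ Y) (z : Fin n → ℂ) :
    JensenMeasures X z ⊆ JensenMeasures Y z := by
  rintro μ ⟨h1, h2, h3⟩
  refine ⟨h1, measure_mono_null (Set.compl_subset_compl.mpr hXY) h2, ?_⟩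
  rintro u ⟨U, hUo, hYU, v, hv1, hv2, hv3⟩
  exact h3 u ⟨U, hUo, hXY.trans hYU, v, hv1, hv2, fun p hp => hv3 p (hXY hp)⟩

lemma circle_jensen {n : ℕ} {D : Set (Fin n → ℂ)} (hD : IsOpen D) (z b : Fin n → ℂ) (r : ℝ)
    (hr : 0 < r) (hmem : ∀ w : ℂ, ‖w‖ ≤ r → z + w • b ∈ D) :
    circleAngleMeasure.map
        (fun θ : ℝ => z + (((r : ℝ) : ℂ) * Complex.exp ((θ : ℂ) * Complex.I)) • b)
      ∈ JensenMeasures (closure D) z := by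
  haveI := circleAngleMeasure_prob
  set f : ℝ → (Fin n → ℂ) :=
    fun θ : ℝ => z + (((r : ℝ) : ℂ) * Complex.exp ((θ : ℂ) * Complex.I)) • b with hf_def
  have hfc : Continuous f := by fun_prop
  have habs : ∀ θ : ℝ, ‖(((r : ℝ) : ℂ) * Complex.exp ((θ : ℂ) * Complex.I))‖ ≤ r := by
    intro θ
    rw [norm_mul, Complex.norm_real, Complex.norm_exp_ofReal_mul_I, mul_one, Real.norm_eq_abs, abs_of_pos hr]
  have hrange : ∀ θ : ℝ, f θ ∈ D := fun θ => hmem _ (habs θ)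
  have hnull : (circleAngleMeasure.map f) (closure D)ᶜ = 0 := by
    rw [Measure.map_apply hfc.measurable isClosed_closure.measurableSet.compl]
    have : f ⁻¹' (closure D)ᶜ = ∅ :=
      Set.eq_empty_iff_forall_notMem.mpr fun θ hθ => hθ (subset_closure (hrange θ))
    rw [this, measure_empty]
  refine ⟨Measure.isProbabilityMeasure_map hfc.measurable.aemeasurable, hnull, ?_⟩
  rintro u ⟨U, hUo, hXU, v, hvc, hvp, hveq⟩
  have hDU : D ⊆ U := subset_closure.trans hXU
  have key := hvp.2.2 z b r hr fun w hw => hDU (hmem w hw)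
  set g : ℝ → ℝ := fun θ => v (f θ) with hg_def
  have hgc : Continuous g := by
    rw [continuous_iff_continuousAt]
    intro θ
    exact (hvc.continuousAt (hUo.mem_nhds (hDU (hrange θ)))).comp hfc.continuousAt
  have hgint : Integrable g circleAngleMeasure := by
    rw [circleAngleMeasure]
    exact (hgc.integrableOn_Ioc).smul_measure (ENNReal.inv_ne_top.mpr
      (ENNReal.ofReal_pos.mpr (by positivity)).ne')
  have keq : erealIntegral circleAngleMeasure (fun θ : ℝ => ((g θ : ℝ) : EReal))
      = ((∫ θ, g θ ∂circleAngleMeasure : ℝ) : EReal) := erealIntegral_coe hgint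
  have key2 : (v z : EReal) ≤ ((∫ θ, g θ ∂circleAngleMeasure : ℝ) : EReal) := by
    rw [← keq]; exact key
  have hvz : v z ≤ ∫ θ, g θ ∂circleAngleMeasure := EReal.coe_le_coe_iff.mp key2
  have hmem_ae : ∀ᵐ x ∂(circleAngleMeasure.map f), x ∈ closure D := by
    rw [ae_iff]; exact hnull
  have hvmeas : AEStronglyMeasurable v (circleAngleMeasure.map f) := by
    have h := hvc.aestronglyMeasurable hUo.measurableSet (μ := circleAngleMeasure.map f)
    rwa [Measure.restrict_eq_self_of_ae_mem (hmem_ae.mono fun x hx => hXU hx)] at h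
  have hzD : z ∈ D := by
    have := hmem 0 (by simpa using hr.le)
    simpa using this
  have hmap : ∫ x, v x ∂(circleAngleMeasure.map f) = ∫ θ, g θ ∂circleAngleMeasure :=
    integral_map hfc.measurable.aemeasurable hvmeas
  calc u z = v z := hveq z (subset_closure hzD)
    _ ≤ ∫ θ, g θ ∂circleAngleMeasure := hvz
    _ = ∫ x, v x ∂(circleAngleMeasure.map f) := hmap.symm
    _ = ∫ x, u x ∂(circleAngleMeasure.map f) :=
        integral_congr_ae ((hmem_ae.mono fun x hx => (hveq x hx).symm))

lemma exhaustion_neg {n : ℕ} {D : Set (Fin n → ℂ)} (hD : IsBoundedDomain D)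
    {φ : (Fin n → ℂ) → ℝ} (hpsh : PshCompact (fun z => ((φ z : ℝ) : EReal)) (closure D))
    (hcont : ContinuousOn φ (closure D))
    (hnc : ∃ z ∈ closure D, ∃ w ∈ closure D, φ z ≠ φ w)
    (hbd : ∀ z ∈ frontier D, φ z = 0) :
    (∀ z ∈ closure D, φ z ≤ 0) ∧ ∀ z ∈ D, φ z < 0 := by
  obtain ⟨hDo, hDc, hDb⟩ := hD
  haveI := circleAngleMeasure_prob
  have hXc : IsCompact (closure D) :=
    Metric.isCompact_of_isClosed_isBounded isClosed_closure hDb.closure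
  have hXne : (closure D).Nonempty := hDc.nonempty.mono subset_closure
  obtain ⟨x, hxX, hmax⟩ := hXc.exists_isMaxOn hXne hcont
  set M := φ x with hM
  have hle : ∀ y ∈ closure D, φ y ≤ M := fun y hy => hmax hy
  obtain ⟨C, hC⟩ := hXc.exists_bound_of_continuousOn hcont
  -- the key openness computation
  have key : ∀ z ∈ D, φ z = M → ∀ᶠ y in nhds z, y ∈ D ∧ φ y = M := by
    intro z hz hφz
    obtain ⟨ε, hε, hball⟩ := Metric.isOpen_iff.mp hDo z hz
    refine Filter.mem_of_superset (Metric.ball_mem_nhds z hε) ?_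
    intro y hy
    refine ⟨hball hy, ?_⟩
    set b : Fin n → ℂ := y - z with hb_def
    have hmem : ∀ w : ℂ, ‖w‖ ≤ 1 → z + w • b ∈ D := by
      intro w hw
      apply hball
      rw [Metric.mem_ball, dist_eq_norm, add_sub_cancel_left, norm_smul]
      have hby : ‖b‖ < ε := by
        rw [hb_def, ← dist_eq_norm]; exact Metric.mem_ball.mp hy
      calc ‖w‖ * ‖b‖ ≤ 1 * ‖b‖ :=
            mul_le_mul_of_nonneg_right hw (norm_nonneg _)
        _ = ‖b‖ := one_mul _
        _ < ε := hby
    have hμJ := circle_jensen hDo z b 1 one_pos (by simpa using hmem)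
    set f : ℝ → (Fin n → ℂ) :=
      fun θ : ℝ => z + ((((1 : ℝ)) : ℂ) * Complex.exp ((θ : ℂ) * Complex.I)) • b with hf_def
    set μ := circleAngleMeasure.map f with hμ_def
    haveI : IsProbabilityMeasure μ := hμJ.1
    have hineq := hpsh.2.2 z (subset_closure hz) μ hμJ
    have hmem_ae : ∀ᵐ p ∂μ, p ∈ closure D := by
      rw [ae_iff]; exact hμJ.2.1
    have hφm : AEStronglyMeasurable φ μ := by
      have h := hcont.aestronglyMeasurable isClosed_closure.measurableSet (μ := μ)
      rwa [Measure.restrict_eq_self_of_ae_mem hmem_ae] at h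
    have hφint : Integrable φ μ :=
      ⟨hφm, HasFiniteIntegral.of_bounded (hmem_ae.mono fun p hp => hC p hp)⟩
    rw [erealIntegral_coe hφint] at hineq
    have hfc : Continuous f := by fun_prop
    have hfD : ∀ θ : ℝ, f θ ∈ D := by
      intro θ
      apply hmem
      rw [norm_mul, Complex.norm_real, Complex.norm_exp_ofReal_mul_I, mul_one]
      norm_num
    set g : ℝ → ℝ := fun θ => φ (f θ) with hg_def
    have hmap : ∫ p, φ p ∂μ = ∫ θ, g θ ∂circleAngleMeasure :=
      integral_map hfc.measurable.aemeasurable hφm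
    have hMle : M ≤ ∫ θ, g θ ∂circleAngleMeasure := by
      have hineq' : ((φ z : ℝ) : EReal) ≤ ((∫ a, φ a ∂μ : ℝ) : EReal) := hineq
      rw [← hmap, ← hφz]
      exact EReal.coe_le_coe_iff.mp hineq' 
    have hgc : Continuous g := by
      rw [continuous_iff_continuousAt]
      intro θ
      refine (hcont.continuousAt ?_).comp hfc.continuousAt
      exact Filter.mem_of_superset (hDo.mem_nhds (hfD θ)) subset_closure
    have hgle : ∀ θ, g θ ≤ M := fun θ => hle _ (subset_closure (hfD θ))
    have hgint : Integrable g circleAngleMeasure := by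
      rw [circleAngleMeasure]
      exact (hgc.integrableOn_Ioc).smul_measure (ENNReal.inv_ne_top.mpr
        (ENNReal.ofReal_pos.mpr (by positivity)).ne')
    have hgeq : ∫ θ, g θ ∂circleAngleMeasure = M := by
      have h1 : ∫ θ, g θ ∂circleAngleMeasure ≤ M := by
        calc ∫ θ, g θ ∂circleAngleMeasure ≤ ∫ _θ, M ∂circleAngleMeasure :=
              integral_mono hgint (integrable_const M) hgle
          _ = M := by rw [integral_const, probReal_univ]; simp
      linarith
    have hint0 : ∫ θ, (M - g θ) ∂circleAngleMeasure = 0 := by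
      rw [integral_sub (integrable_const M) hgint, hgeq, integral_const, probReal_univ]
      simp
    have hae : (fun θ => M - g θ) =ᶠ[ae circleAngleMeasure] 0 :=
      (integral_eq_zero_iff_of_nonneg (fun θ => sub_nonneg.mpr (hgle θ))
        ((integrable_const M).sub hgint)).mp hint0
    have hae2 : ∀ᵐ θ ∂circleAngleMeasure, g θ = M := by
      filter_upwards [hae] with θ hθ
      have hθ' : M - g θ = 0 := hθ
      linarith
    have hNc : IsClosed {θ : ℝ | g θ = M} := isClosed_eq hgc continuous_const
    have hNopen : IsOpen {θ : ℝ | g θ ≠ M} := hNc.isOpen_compl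
    have hnull : circleAngleMeasure {θ : ℝ | g θ ≠ M} = 0 := ae_iff.mp hae2
    have hvol : volume ({θ : ℝ | g θ ≠ M} ∩ Set.Ioc 0 (2 * Real.pi)) = 0 := by
      rw [circleAngleMeasure, Measure.smul_apply,
        Measure.restrict_apply hNopen.measurableSet, smul_eq_mul] at hnull
      rcases mul_eq_zero.mp hnull with h | h
      · exact absurd h (ENNReal.inv_ne_zero.mpr ENNReal.ofReal_ne_top)
      · exact h
    by_contra hφy
    have hf2π : f (2 * Real.pi) = y := by
      have hexp : Complex.exp (((2 * Real.pi : ℝ) : ℂ) * Complex.I) = 1 := by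
        push_cast
        exact Complex.exp_two_pi_mul_I
      rw [hf_def]
      simp only [hexp, Complex.ofReal_one, one_mul, one_smul, hb_def]
      abel
    have h2πN : (2 * Real.pi) ∈ {θ : ℝ | g θ ≠ M} := by
      simp only [Set.mem_setOf_eq, hg_def, hf2π]
      exact hφy
    obtain ⟨δ, hδ, hballN⟩ := Metric.isOpen_iff.mp hNopen _ h2πN
    set δ' := min (δ / 2) Real.pi with hδ'_def
    have hδ'pos : 0 < δ' := lt_min (by linarith) Real.pi_pos
    have hsub : Set.Ioc (2 * Real.pi - δ') (2 * Real.pi)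
        ⊆ {θ : ℝ | g θ ≠ M} ∩ Set.Ioc 0 (2 * Real.pi) := by
      intro θ hθ
      have h1 := hθ.1
      have h2 := hθ.2
      have hd2 : δ' ≤ δ / 2 := min_le_left _ _
      have hdp : δ' ≤ Real.pi := min_le_right _ _
      have hpi := Real.pi_pos
      constructor
      · apply hballN
        rw [Metric.mem_ball, Real.dist_eq, abs_lt]
        constructor <;> nlinarith
      · constructor <;> nlinarith
    have hvol' := measure_mono_null hsub hvol
    rw [Real.volume_Ioc] at hvol'
    have : (2 : ℝ) * Real.pi - (2 * Real.pi - δ') = δ' := by ring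
    rw [this] at hvol'
    exact absurd hvol' (ENNReal.ofReal_pos.mpr hδ'pos).ne'
  -- openness of S and T
  set S := {p : Fin n → ℂ | p ∈ D ∧ φ p = M} with hS_def
  set T := {p : Fin n → ℂ | p ∈ D ∧ φ p ≠ M} with hT_def
  have hSopen : IsOpen S := by
    rw [isOpen_iff_mem_nhds]
    intro p hp
    exact key p hp.1 hp.2
  have hTopen : IsOpen T := by
    rw [isOpen_iff_mem_nhds]
    intro p hp
    have hca : ContinuousAt φ p :=
      hcont.continuousAt (Filter.mem_of_superset (hDo.mem_nhds hp.1) subset_closure)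
    have h1 : ∀ᶠ y in nhds p, y ∈ D := hDo.mem_nhds hp.1
    exact h1.and (hca.eventually_ne hp.2)
  rcases Set.eq_empty_or_nonempty T with hT | hTne
  · -- φ ≡ M on D, hence on closure D, contradicting nonconstancy
    exfalso
    have hDM : ∀ p ∈ D, φ p = M := by
      intro p hp
      by_contra h
      exact Set.eq_empty_iff_forall_notMem.mp hT p ⟨hp, h⟩
    have hXM : ∀ w ∈ closure D, φ w = M := by
      intro w hw
      haveI : (nhdsWithin w D).NeBot := mem_closure_iff_nhdsWithin_neBot.mp hw
      have h1 : Filter.Tendsto φ (nhdsWithin w D) (nhds (φ w)) :=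
        ((hcont w hw).mono_left (nhdsWithin_mono w subset_closure))
      have h2 : Filter.Tendsto φ (nhdsWithin w D) (nhds M) := by
        refine Filter.Tendsto.congr' ?_ tendsto_const_nhds
        exact eventually_mem_nhdsWithin.mono fun p hp => (hDM p hp).symm
      exact tendsto_nhds_unique h1 h2
    obtain ⟨z1, hz1, z2, hz2, hne12⟩ := hnc
    exact hne12 (by rw [hXM z1 hz1, hXM z2 hz2])
  rcases Set.eq_empty_or_nonempty S with hSe | hSne
  · -- max attained only on the boundary, so M = 0
    have hxD : x ∉ D := fun h => Set.eq_empty_iff_forall_notMem.mp hSe x ⟨h, rfl⟩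
    have hM0 : M = 0 := hbd x (by rw [hDo.frontier_eq]; exact ⟨hxX, hxD⟩)
    constructor
    · intro p hp; rw [← hM0]; exact hle p hp
    · intro p hp
      refine lt_of_le_of_ne (by rw [← hM0]; exact hle p (subset_closure hp)) ?_
      intro h
      exact Set.eq_empty_iff_forall_notMem.mp hSe p ⟨hp, by rw [h, hM0]⟩
  · -- both S and T nonempty contradicts connectedness
    exfalso
    have hcover : D ⊆ S ∪ T := by
      intro p hp
      by_cases h : φ p = M
      · exact Or.inl ⟨hp, h⟩
      · exact Or.inr ⟨hp, h⟩
    obtain ⟨sp, hsp⟩ := hSne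
    obtain ⟨tp, htp⟩ := hTne
    obtain ⟨q, hq⟩ := hDc.isPreconnected S T hSopen hTopen hcover
      ⟨sp, hsp.1, hsp⟩ ⟨tp, htp.1, htp⟩
    exact hq.2.2.2 hq.2.1.2

end PHxAux

end Aux

/-- The intersection of two P-hyperconvex domains (if nonempty and connected)
is P-hyperconvex. -/
theorem phyperconvex_inter {n : ℕ} (Ω₁ Ω₂ : Set (Fin n → ℂ))
    (h₁ : IsPHyperconvex Ω₁) (h₂ : IsPHyperconvex Ω₂)
    (hne : (Ω₁ ∩ Ω₂).Nonempty) (hconn : IsConnected (Ω₁ ∩ Ω₂)) :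
    IsPHyperconvex (Ω₁ ∩ Ω₂) := by
  classical
  obtain ⟨⟨hO1, hC1, hB1⟩, φ₁, hp1, hc1, hnc1, hb1⟩ := h₁
  obtain ⟨⟨hO2, hC2, hB2⟩, φ₂, hp2, hc2, hnc2, hb2⟩ := h₂
  rcases subsingleton_or_nontrivial (Fin n → ℂ) with hs | hnt
  · obtain ⟨z, _, w, _, hzw⟩ := hnc1
    exact absurd (congrArg φ₁ (Subsingleton.elim z w)) hzw
  have hA1 := PHxAux.exhaustion_neg ⟨hO1, hC1, hB1⟩ hp1 hc1 hnc1 hb1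
  have hA2 := PHxAux.exhaustion_neg ⟨hO2, hC2, hB2⟩ hp2 hc2 hnc2 hb2
  have hOo : IsOpen (Ω₁ ∩ Ω₂) := hO1.inter hO2
  have hOb : Bornology.IsBounded (Ω₁ ∩ Ω₂) := hB1.subset Set.inter_subset_left
  have hclsub1 : closure (Ω₁ ∩ Ω₂) ⊆ closure Ω₁ := closure_mono Set.inter_subset_left
  have hclsub2 : closure (Ω₁ ∩ Ω₂) ⊆ closure Ω₂ := closure_mono Set.inter_subset_right
  set φ : (Fin n → ℂ) → ℝ := fun z => max (φ₁ z) (φ₂ z) with hφ_def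
  have hφc : ContinuousOn φ (closure (Ω₁ ∩ Ω₂)) := (hc1.mono hclsub1).sup (hc2.mono hclsub2)
  have hfr : ∀ z ∈ frontier (Ω₁ ∩ Ω₂), φ z = 0 := by
    intro z hz
    have hz1 : z ∈ closure Ω₁ := hclsub1 (frontier_subset_closure hz)
    have hz2 : z ∈ closure Ω₂ := hclsub2 (frontier_subset_closure hz)
    have hle1 : φ₁ z ≤ 0 := hA1.1 z hz1
    have hle2 : φ₂ z ≤ 0 := hA2.1 z hz2
    have hzout : z ∉ Ω₁ ∩ Ω₂ := by
      rw [hOo.frontier_eq] at hz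
      exact hz.2
    by_cases hzΩ1 : z ∈ Ω₁
    · have hz2f : z ∈ frontier Ω₂ := by
        rw [hO2.frontier_eq]
        exact ⟨hz2, fun h => hzout ⟨hzΩ1, h⟩⟩
      simp only [hφ_def, hb2 z hz2f]
      exact max_eq_right hle1
    · have hz1f : z ∈ frontier Ω₁ := by
        rw [hO1.frontier_eq]
        exact ⟨hz1, hzΩ1⟩
      simp only [hφ_def, hb1 z hz1f]
      exact max_eq_left hle2
  refine ⟨⟨hOo, hconn, hOb⟩, φ, ⟨?_, fun z _ => EReal.coe_ne_top _, ?_⟩, hφc, ?_, hfr⟩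
  · -- upper semicontinuity
    intro p hp y hy
    have hcw : ContinuousWithinAt φ (closure (Ω₁ ∩ Ω₂)) p := hφc p hp
    have htd : Filter.Tendsto (fun q => ((φ q : ℝ) : EReal))
        (nhdsWithin p (closure (Ω₁ ∩ Ω₂))) (nhds ((φ p : ℝ) : EReal)) :=
      (continuous_coe_real_ereal.tendsto _).comp hcw
    exact htd (Iio_mem_nhds hy)
  · -- the Jensen measure inequality
    intro z hz μ hμ
    have hμ1 := PHxAux.jensenMeasures_mono hclsub1 z hμ
    have hμ2 := PHxAux.jensenMeasures_mono hclsub2 z hμ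
    haveI : IsProbabilityMeasure μ := hμ.1
    have hmem_ae : ∀ᵐ p ∂μ, p ∈ closure (Ω₁ ∩ Ω₂) := by
      rw [MeasureTheory.ae_iff]; exact hμ.2.1
    have hXc1 : IsCompact (closure Ω₁) :=
      Metric.isCompact_of_isClosed_isBounded isClosed_closure hB1.closure
    have hXc2 : IsCompact (closure Ω₂) :=
      Metric.isCompact_of_isClosed_isBounded isClosed_closure hB2.closure
    obtain ⟨C₁, hC₁⟩ := hXc1.exists_bound_of_continuousOn hc1
    obtain ⟨C₂, hC₂⟩ := hXc2.exists_bound_of_continuousOn hc2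
    have h1m : AEStronglyMeasurable φ₁ μ := by
      have h := (hc1.mono hclsub1).aestronglyMeasurable isClosed_closure.measurableSet (μ := μ)
      rwa [MeasureTheory.Measure.restrict_eq_self_of_ae_mem hmem_ae] at h
    have h2m : AEStronglyMeasurable φ₂ μ := by
      have h := (hc2.mono hclsub2).aestronglyMeasurable isClosed_closure.measurableSet (μ := μ)
      rwa [MeasureTheory.Measure.restrict_eq_self_of_ae_mem hmem_ae] at h
    have h1int : Integrable φ₁ μ :=
      ⟨h1m, MeasureTheory.HasFiniteIntegral.of_bounded
        (hmem_ae.mono fun p hp => hC₁ p (hclsub1 hp))⟩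
    have h2int : Integrable φ₂ μ :=
      ⟨h2m, MeasureTheory.HasFiniteIntegral.of_bounded
        (hmem_ae.mono fun p hp => hC₂ p (hclsub2 hp))⟩
    have hφint : Integrable φ μ := h1int.sup h2int
    have k1 := hp1.2.2 z (hclsub1 hz) μ hμ1
    have k2 := hp2.2.2 z (hclsub2 hz) μ hμ2
    rw [PHxAux.erealIntegral_coe h1int] at k1
    rw [PHxAux.erealIntegral_coe h2int] at k2
    have i1 : φ₁ z ≤ ∫ p, φ₁ p ∂μ := EReal.coe_le_coe_iff.mp k1
    have i2 : φ₂ z ≤ ∫ p, φ₂ p ∂μ := EReal.coe_le_coe_iff.mp k2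
    have m1 : ∫ p, φ₁ p ∂μ ≤ ∫ p, φ p ∂μ :=
      MeasureTheory.integral_mono h1int hφint fun p => le_max_left _ _
    have m2 : ∫ p, φ₂ p ∂μ ≤ ∫ p, φ p ∂μ :=
      MeasureTheory.integral_mono h2int hφint fun p => le_max_right _ _
    have hgoal : φ z ≤ ∫ p, φ p ∂μ := max_le (i1.trans m1) (i2.trans m2)
    calc ((φ z : ℝ) : EReal) ≤ ((∫ p, φ p ∂μ : ℝ) : EReal) := EReal.coe_le_coe_iff.mpr hgoal
      _ = erealIntegral μ (fun p => ((φ p : ℝ) : EReal)) := (PHxAux.erealIntegral_coe hφint).symm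
  · -- nonconstancy
    obtain ⟨z₀, hz₀⟩ := hne
    have hneg : φ z₀ < 0 := max_lt (hA1.2 z₀ hz₀.1) (hA2.2 z₀ hz₀.2)
    have hfrne : (frontier (Ω₁ ∩ Ω₂)).Nonempty := by
      rw [Set.nonempty_iff_ne_empty]
      intro h
      have hclopen : IsClopen (Ω₁ ∩ Ω₂) := isClopen_iff_frontier_eq_empty.mpr h
      rcases isClopen_iff.mp hclopen with h1 | h1
      · exact Set.nonempty_iff_ne_empty.mp ⟨z₀, hz₀⟩ h1
      · exact NormedSpace.unbounded_univ ℂ (Fin n → ℂ) (h1 ▸ hOb)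
    obtain ⟨w, hw⟩ := hfrne
    exact ⟨w, frontier_subset_closure hw, z₀, subset_closure hz₀,
      by rw [hfr w hw]; exact hneg.ne'⟩
end
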